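/- Let L ≥ 1, let B, B̃ ∈ ℝ^{L×L} and ψ, ψ̃ ∈ ℝ, and let E = e_L e_Lᵀ be the L×L matrix whose only nonzero entry is a 1 in position (L,L). Suppose θ ∈ ℝ and v, w ∈ ℂ^L satisfy [[B, ψI],[−E, Bᵀ]] (v; w) = θ [[B̃, ψ̃I],[−E, B̃ᵀ]] (v; w). Then ψ‖w‖₂² + |v_L|² = θ (ψ̃‖w‖₂² + |v_L|²), where v_L denotes the last component of v. -/

import Mathlib

open Matrix

/-- The L×L matrix whose only nonzero entry is a 1 in the bottom-right corner. -/
def cornerMat (L : ℕ) : Matrix (Fin L) (Fin L) ℝ :=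
  fun i j => if (i : ℕ) = L - 1 ∧ (j : ℕ) = L - 1 then 1 else 0

/-- The terminal-cost block matrix [[B, ψI],[−E, Bᵀ]]. -/
def terminalBlock (L : ℕ) (B : Matrix (Fin L) (Fin L) ℝ) (ψ : ℝ) :
    Matrix (Fin L ⊕ Fin L) (Fin L ⊕ Fin L) ℝ :=
  Matrix.fromBlocks B (ψ • (1 : Matrix (Fin L) (Fin L) ℝ)) (-(cornerMat L)) Bᵀ

theorem terminal_cost_real_eigenvalue_identity
    (L : ℕ) (hL : 1 ≤ L) (B Bt : Matrix (Fin L) (Fin L) ℝ) (ψ ψt : ℝ)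
    (θ : ℝ) (v w : Fin L → ℂ)
    (heig : ((terminalBlock L B ψ).map Complex.ofReal).mulVec (Sum.elim v w) =
      (θ : ℂ) • ((terminalBlock L Bt ψt).map Complex.ofReal).mulVec (Sum.elim v w)) :
    ψ * ∑ i, ‖w i‖ ^ 2 + ‖v ⟨L - 1, by omega⟩‖ ^ 2 =
      θ * (ψt * ∑ i, ‖w i‖ ^ 2 + ‖v ⟨L - 1, by omega⟩‖ ^ 2) := by
  set lL : Fin L := ⟨L - 1, by omega⟩ with hlL
  set c : ℂ →+* ℂ := starRingEnd ℂ with hc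
  -- componentwise equations
  have h1 : ∀ i : Fin L, (∑ j, (B i j : ℂ) * v j) + ψ * w i
      = θ * ((∑ j, (Bt i j : ℂ) * v j) + ψt * w i) := by
    intro i
    have h := congrFun heig (Sum.inl i)
    simp only [terminalBlock, Matrix.mulVec, dotProduct, Matrix.fromBlocks,
      Fintype.sum_sum_type, Matrix.map_apply, Sum.elim_inl, Sum.elim_inr, Pi.smul_apply,
      smul_eq_mul, Matrix.one_apply, Matrix.of_apply, mul_ite, mul_one, mul_zero, ite_mul,
      zero_mul] at h
    simpa [Matrix.smul_apply, Matrix.one_apply, mul_ite, mul_zero, mul_one,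
      apply_ite Complex.ofReal, ite_mul, zero_mul, Finset.sum_ite_eq'] using h
  have hx : ∀ x : Fin L, ((x:ℕ) = L - 1) = (x = lL) := fun x => by
    simp [hlL, Fin.ext_iff]
  have h2 : ∀ i : Fin L, -(if (i : ℕ) = L - 1 then v lL else 0)
      + (∑ j, (B j i : ℂ) * w j)
      = θ * (-(if (i : ℕ) = L - 1 then v lL else 0) + (∑ j, (Bt j i : ℂ) * w j)) := by
    intro i
    have h := congrFun heig (Sum.inr i)
    simp only [terminalBlock, Matrix.mulVec, dotProduct, Matrix.fromBlocks,
      Fintype.sum_sum_type, Matrix.map_apply, Sum.elim_inl, Sum.elim_inr, Pi.smul_apply,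
      smul_eq_mul, Matrix.transpose_apply, Matrix.neg_apply, cornerMat, Matrix.of_apply,
      ite_mul, zero_mul, one_mul, Complex.ofReal_neg, Complex.ofReal_one, Complex.ofReal_zero,
      neg_mul, apply_ite Complex.ofReal] at h
    simpa [ite_and, hx, Finset.sum_ite_eq', Finset.sum_neg_distrib,
      Finset.sum_ite_irrel] using h
  -- abbreviations
  set W : ℂ := ∑ i, c (w i) * w i with hW
  set C : ℂ := c (v lL) * v lL with hC
  -- sesquilinear forms
  have expand1 : ∀ (M : Matrix (Fin L) (Fin L) ℝ) (ρ d : ℂ),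
      ∑ i, c (w i) * (d * ((∑ j, (M i j : ℂ) * v j) + ρ * w i))
        = d * (∑ i, c (w i) * ∑ j, (M i j : ℂ) * v j) + (d * ρ) * W := by
    intro M ρ d
    rw [hW, Finset.mul_sum, Finset.mul_sum, ← Finset.sum_add_distrib]
    exact Finset.sum_congr rfl fun i _ => by ring
  have hCsum : ∑ i, c (v i) * (if (i : ℕ) = L - 1 then v lL else 0) = C := by
    simp [hx, mul_ite, mul_zero, Finset.sum_ite_eq', hC]
  have expand2 : ∀ (M : Matrix (Fin L) (Fin L) ℝ) (d : ℂ),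
      ∑ i, c (v i) * (d * (-(if (i : ℕ) = L - 1 then v lL else 0) + ∑ j, (M j i : ℂ) * w j))
        = -(d * C) + d * (∑ i, c (v i) * ∑ j, (M j i : ℂ) * w j) := by
    intro M d
    rw [← hCsum, Finset.mul_sum, Finset.mul_sum, ← Finset.sum_neg_distrib,
      ← Finset.sum_add_distrib]
    exact Finset.sum_congr rfl fun i _ => by ring
  have hconj : ∀ M : Matrix (Fin L) (Fin L) ℝ,
      c (∑ i, c (v i) * ∑ j, (M j i : ℂ) * w j)
        = ∑ i, c (w i) * ∑ j, (M i j : ℂ) * v j := by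
    intro M
    rw [map_sum]
    simp only [_root_.map_mul, map_sum, Complex.conj_conj, Complex.conj_ofReal, hc]
    simp_rw [Finset.mul_sum]
    rw [Finset.sum_comm]
    exact Finset.sum_congr rfl fun j _ => Finset.sum_congr rfl fun i _ => by ring
  -- summed equations
  have S1 : ∑ i, c (w i) * ((1:ℂ) * ((∑ j, (B i j : ℂ) * v j) + ψ * w i))
      = ∑ i, c (w i) * ((θ:ℂ) * ((∑ j, (Bt i j : ℂ) * v j) + ψt * w i)) :=
    Finset.sum_congr rfl fun i _ => by rw [one_mul, h1 i]
  have S2 : ∑ i, c (v i) * ((1:ℂ) * (-(if (i : ℕ) = L - 1 then v lL else 0)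
        + ∑ j, (B j i : ℂ) * w j))
      = ∑ i, c (v i) * ((θ:ℂ) * (-(if (i : ℕ) = L - 1 then v lL else 0)
        + ∑ j, (Bt j i : ℂ) * w j)) :=
    Finset.sum_congr rfl fun i _ => by rw [one_mul, h2 i]
  rw [expand1 B _ 1, expand1 Bt _ θ] at S1
  rw [expand2 B 1, expand2 Bt θ] at S2
  have S2' := congrArg c S2
  simp only [map_add, map_neg, _root_.map_mul, _root_.map_one, Complex.conj_ofReal, hconj, hc] at S2'
  rw [← hc, hconj, hconj] at S2'
  have hCconj : (starRingEnd ℂ) C = C := by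
    rw [hC, _root_.map_mul, Complex.conj_conj]; ring
  rw [← hc] at hCconj; rw [hCconj] at S2'
  have key : (ψ : ℂ) * W + C = (θ : ℂ) * ((ψt : ℂ) * W + C) := by
    linear_combination S1 - S2'
  have hn : ∀ z : ℂ, c z * z = ((‖z‖ ^ 2 : ℝ) : ℂ) := fun z => by
    rw [hc, mul_comm, Complex.mul_conj, Complex.normSq_eq_norm_sq]
  rw [hW, hC] at key
  simp only [hn] at key
  rw [← Complex.ofReal_sum] at key
  exact_mod_cast key
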